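/- Let n > 0 and let p^a_GB, p^a_BG, p^p_GB, p^p_BG ∈ [0,1] satisfy assumptions (3a) p^p_GB ≥ p^a_GB and p^a_BG ≥ p^p_BG, (3c) p^a_BG − p^p_BG > p^p_GB − p^a_GB, and p^p_GB + p^p_BG > 0. Write cure = p^a_BG − p^p_BG, prevention = p^p_GB − p^a_GB, p̂_GB(w) = w p^a_GB + (1−w)p^p_GB, p̂_BG(w) = w p^a_BG + (1−w)p^p_BG, and for w ∈ [0,1] let q*(w) = n·p̂_BG(w)/(p̂_GB(w) + p̂_BG(w)) (the unique fixed point of f_w on [0,n]). Then the steady-state per-round reward of pulling every round with exposure w satisfies the identity w·(prevention·q*(w) + cure·(n − q*(w))) = n·(cure·p^p_GB + prevention·p^p_BG)·w / ((p^p_GB + p^p_BG) + (cure − prevention)·w), and this function of w is monotone nondecreasing and concave on [0,1]. -/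

import Mathlib

lemma aux_convexOn_inv_affine (s d : ℝ) (hs : 0 < s) (hd : 0 < d) :
    ConvexOn ℝ (Set.Icc (0:ℝ) 1) (fun w => (s + d * w)⁻¹) := by
  have h1 : ConvexOn ℝ (Set.Ioi (0:ℝ)) (fun x : ℝ => x⁻¹) := by
    have := convexOn_zpow (𝕜 := ℝ) (-1)
    simpa using this
  refine ⟨convex_Icc 0 1, ?_⟩
  intro x hx y hy a b ha hb hab
  have hxpos : s + d * x ∈ Set.Ioi (0:ℝ) := by
    have := hx.1; simp only [Set.mem_Ioi]; nlinarith
  have hypos : s + d * y ∈ Set.Ioi (0:ℝ) := by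
    have := hy.1; simp only [Set.mem_Ioi]; nlinarith
  have key := h1.2 hxpos hypos ha hb hab
  have : s + d * (a * x + b * y) = a * (s + d * x) + b * (s + d * y) := by
    linear_combination (-s) * hab
  simpa [this] using key

theorem stmt_9 (n paGB paBG ppGB ppBG : ℝ)
    (hn : 0 < n)
    (hpaGB : paGB ∈ Set.Icc (0:ℝ) 1) (hpaBG : paBG ∈ Set.Icc (0:ℝ) 1)
    (hppGB : ppGB ∈ Set.Icc (0:ℝ) 1) (hppBG : ppBG ∈ Set.Icc (0:ℝ) 1)
    (h3a₁ : ppGB ≥ paGB) (h3a₂ : paBG ≥ ppBG)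
    (h3c : paBG - ppBG > ppGB - paGB)
    (hsum : 0 < ppGB + ppBG)
    (q R : ℝ → ℝ)
    (hq : ∀ w : ℝ, q w = n * (w * paBG + (1 - w) * ppBG) /
      ((w * paGB + (1 - w) * ppGB) + (w * paBG + (1 - w) * ppBG)))
    (hR : ∀ w : ℝ, R w = w * ((ppGB - paGB) * q w + (paBG - ppBG) * (n - q w))) :
    (∀ w ∈ Set.Icc (0:ℝ) 1,
      R w = n * ((paBG - ppBG) * ppGB + (ppGB - paGB) * ppBG) * w /
        ((ppGB + ppBG) + ((paBG - ppBG) - (ppGB - paGB)) * w)) ∧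
    MonotoneOn R (Set.Icc (0:ℝ) 1) ∧
    ConcaveOn ℝ (Set.Icc (0:ℝ) 1) R := by
  set s : ℝ := ppGB + ppBG with hs_def
  set d : ℝ := (paBG - ppBG) - (ppGB - paGB) with hd_def
  set C : ℝ := (paBG - ppBG) * ppGB + (ppGB - paGB) * ppBG with hC_def
  have hd : 0 < d := by simp only [hd_def]; linarith
  have hC : 0 ≤ C := by
    have := hppGB.1; have := hppBG.1
    nlinarith
  -- positivity of denominator on [0,1]
  have hDpos : ∀ w ∈ Set.Icc (0:ℝ) 1, 0 < s + d * w := by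
    intro w hw
    have := hw.1; nlinarith
  -- the identity
  have hid : ∀ w ∈ Set.Icc (0:ℝ) 1, R w = n * C * w / (s + d * w) := by
    intro w hw
    have hD : (w * paGB + (1 - w) * ppGB) + (w * paBG + (1 - w) * ppBG) ≠ 0 := by
      have := hDpos w hw
      simp only [hs_def, hd_def] at this
      intro h; nlinarith
    have hD2 : s + d * w ≠ 0 := ne_of_gt (hDpos w hw)
    rw [hR, hq]
    simp only [hs_def, hd_def, hC_def] at hD2 ⊢
    have hDeq : (w * paGB + (1 - w) * ppGB) + (w * paBG + (1 - w) * ppBG) = ppGB + ppBG + (paBG - ppBG - (ppGB - paGB)) * w := by ring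
    rw [hDeq, eq_div_iff hD2]
    have hc := div_mul_cancel₀ (n * (w * paBG + (1 - w) * ppBG)) hD2
    linear_combination (w * ((ppGB - paGB) - (paBG - ppBG))) * hc
  refine ⟨fun w hw => hid w hw, ?_, ?_⟩
  · -- monotone
    intro x hx y hy hxy
    rw [hid x hx, hid y hy]
    have hx' := hDpos x hx
    have hy' := hDpos y hy
    rw [div_le_div_iff₀ hx' hy']
    have hsp : 0 < s := hsum
    nlinarith [mul_nonneg (mul_nonneg hn.le hC) (sub_nonneg.2 hxy)]
  · -- concave
    have hconv := aux_convexOn_inv_affine s d hsum hd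
    have hnn : 0 ≤ n * C * s / d :=
      div_nonneg (mul_nonneg (mul_nonneg hn.le hC) hsum.le) hd.le
    have h2 := ((hconv.smul hnn).neg.add_const (n * C / d))
    refine h2.congr ?_
    intro w hw
    simp only [Pi.add_apply, Pi.neg_apply]
    rw [hid w hw]
    have h1 : s + d * w ≠ 0 := ne_of_gt (hDpos w hw)
    have h3 : d ≠ 0 := hd.ne'
    field_simp
    have e1 : (s + d * w) * (s + d * w)⁻¹ = 1 := mul_inv_cancel₀ h1
    have e2 : d * d⁻¹ = 1 := mul_inv_cancel₀ h3
    linear_combination (-(s * n * C)) * e2 - (s * n * C * d * d⁻¹) * e1
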